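/- Uniqueness of Wardrop equilibrium under weak interference (Theorem 2): Let G be an N×N real matrix with positive entries g_{ij} satisfying the weak cross-AP interference condition ∑_{j≠i}(g_{ij} + g_{ji}) < 2·g_{ii} for every i, let w, s > 0, and let M be the matrix with entries M_{ij} = g_{ji} + s. Then for every price vector p ∈ ℝ^N with p ≥ 0 there exists a unique x ∈ ℝ^N satisfying the linear complementarity problem: x ≥ 0 (componentwise), M x + (p − w·𝟏) ≥ 0 (componentwise), and xᵀ(M x + (p − w·𝟏)) = 0. -/

import Mathlib

open Finset

/-- Swap the two indices in a double sum over off-diagonal pairs. -/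
lemma offdiag_sum_swap {N : ℕ} (f : Fin N → Fin N → ℝ) :
    ∑ i, ∑ j ∈ Finset.univ.erase i, f i j = ∑ i, ∑ j ∈ Finset.univ.erase i, f j i := by
  have h : ∀ g : Fin N → Fin N → ℝ,
      ∑ i, ∑ j ∈ Finset.univ.erase i, g i j
        = ∑ i, ∑ j, if j = i then 0 else g i j := by
    intro g
    refine Finset.sum_congr rfl fun i _ => ?_
    rw [show (∑ j, if j = i then 0 else g i j)
        = ∑ j ∈ Finset.univ.erase i, (if j = i then 0 else g i j) from
      (Finset.sum_erase _ (by simp)).symm]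
    exact Finset.sum_congr rfl fun j hj => by simp [Finset.ne_of_mem_erase hj]
  rw [h, h, Finset.sum_comm]
  refine Finset.sum_congr rfl fun i _ => Finset.sum_congr rfl fun j _ => ?_
  by_cases hij : i = j <;> simp [hij, eq_comm]

/-- Strong monotonicity: quadratic form lower bound. -/
lemma quad_lb {N : ℕ} (G : Matrix (Fin N) (Fin N) ℝ) (hG : ∀ i j, 0 < G i j)
    (s : ℝ) (hs : 0 ≤ s)
    (M : Matrix (Fin N) (Fin N) ℝ) (hM : ∀ i j, M i j = G j i + s)
    (z : Fin N → ℝ) :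
    ∑ i, (G i i - (∑ j ∈ Finset.univ.erase i, (G i j + G j i)) / 2) * z i ^ 2
      ≤ ∑ i, z i * M.mulVec z i := by
  have expand : ∑ i, z i * M.mulVec z i
      = (∑ i, ∑ j, G j i * (z i * z j)) + s * (∑ i, z i) ^ 2 := by
    have e1 : s * (∑ i, z i) ^ 2 = ∑ i, ∑ j, s * (z i * z j) := by
      rw [sq, Finset.sum_mul_sum, Finset.mul_sum]
      exact Finset.sum_congr rfl fun i _ => by
        rw [Finset.mul_sum]
    rw [e1, ← Finset.sum_add_distrib]
    refine Finset.sum_congr rfl fun i _ => ?_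
    rw [← Finset.sum_add_distrib]
    simp only [Matrix.mulVec, dotProduct, hM, Finset.mul_sum]
    exact Finset.sum_congr rfl fun j _ => by ring
  rw [expand]
  have h2 : (∑ i, ∑ j, G j i * (z i * z j))
      = ∑ i, (G i i * z i ^ 2 + ∑ j ∈ Finset.univ.erase i, G j i * (z i * z j)) := by
    refine Finset.sum_congr rfl fun i _ => ?_
    rw [← Finset.add_sum_erase Finset.univ (fun j => G j i * (z i * z j)) (Finset.mem_univ i)]
    congr 1; ring
  have hLHS : ∑ i, (G i i - (∑ j ∈ Finset.univ.erase i, (G i j + G j i)) / 2) * z i ^ 2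
      = ∑ i, (G i i * z i ^ 2
          + ∑ j ∈ Finset.univ.erase i, -(G j i * ((z i ^ 2 + z j ^ 2) / 2))) := by
    have swap : ∑ i, ∑ j ∈ Finset.univ.erase i, (G i j / 2 * z i ^ 2)
        = ∑ i, ∑ j ∈ Finset.univ.erase i, (G j i / 2 * z j ^ 2) :=
      offdiag_sum_swap (fun i j => G i j / 2 * z i ^ 2)
    have l1 : ∑ i, (G i i - (∑ j ∈ Finset.univ.erase i, (G i j + G j i)) / 2) * z i ^ 2
        = ∑ i, (G i i * z i ^ 2
            - (∑ j ∈ Finset.univ.erase i, (G i j / 2 * z i ^ 2)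
              + ∑ j ∈ Finset.univ.erase i, (G j i / 2 * z i ^ 2))) := by
      refine Finset.sum_congr rfl fun i _ => ?_
      rw [← Finset.sum_add_distrib, sub_mul, Finset.sum_div, Finset.sum_mul]
      congr 1
      exact Finset.sum_congr rfl fun j _ => by ring
    have l2 : ∑ i, ∑ j ∈ Finset.univ.erase i, -(G j i * ((z i ^ 2 + z j ^ 2) / 2))
        = -((∑ i, ∑ j ∈ Finset.univ.erase i, (G j i / 2 * z j ^ 2))
            + ∑ i, ∑ j ∈ Finset.univ.erase i, (G j i / 2 * z i ^ 2)) := by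
      rw [← Finset.sum_add_distrib, ← Finset.sum_neg_distrib]
      refine Finset.sum_congr rfl fun i _ => ?_
      rw [← Finset.sum_add_distrib, ← Finset.sum_neg_distrib]
      exact Finset.sum_congr rfl fun j _ => by ring
    rw [l1, Finset.sum_sub_distrib, Finset.sum_add_distrib, swap,
      Finset.sum_add_distrib, l2, sub_eq_add_neg]
  rw [hLHS, h2]
  have hsq : 0 ≤ s * (∑ i, z i) ^ 2 := mul_nonneg hs (sq_nonneg _)
  have main : ∑ i, (G i i * z i ^ 2
        + ∑ j ∈ Finset.univ.erase i, -(G j i * ((z i ^ 2 + z j ^ 2) / 2)))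
      ≤ ∑ i, (G i i * z i ^ 2 + ∑ j ∈ Finset.univ.erase i, G j i * (z i * z j)) := by
    refine Finset.sum_le_sum fun i _ => ?_
    refine add_le_add_right (Finset.sum_le_sum fun j _ => ?_) _
    have := hG j i
    nlinarith [sq_nonneg (z i + z j)]
  linarith

lemma mulVec_sub' {N : ℕ} (M : Matrix (Fin N) (Fin N) ℝ) (x y : Fin N → ℝ) (i : Fin N) :
    M.mulVec (fun j => x j - y j) i = M.mulVec x i - M.mulVec y i := by
  simp [Matrix.mulVec, dotProduct, mul_sub, Finset.sum_sub_distrib]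

/-- **Uniqueness of Wardrop equilibrium under weak interference (Theorem 2).**
Under the weak cross-AP interference condition, for every nonnegative price vector `p`
the linear complementarity problem `x ≥ 0`, `M x + (p - w·𝟏) ≥ 0`,
`xᵀ (M x + (p - w·𝟏)) = 0` has a unique solution. -/
theorem uniqueness_of_wardrop_equilibrium
    (N : ℕ) (G : Matrix (Fin N) (Fin N) ℝ) (hG : ∀ i j, 0 < G i j)
    (hweak : ∀ i, ∑ j ∈ Finset.univ.erase i, (G i j + G j i) < 2 * G i i)
    (w s : ℝ) (hw : 0 < w) (hs : 0 < s)
    (M : Matrix (Fin N) (Fin N) ℝ) (hM : ∀ i j, M i j = G j i + s)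
    (p : Fin N → ℝ) (hp : ∀ i, 0 ≤ p i) :
    ∃! x : Fin N → ℝ,
      (∀ i, 0 ≤ x i) ∧
      (∀ i, 0 ≤ M.mulVec x i + (p i - w)) ∧
      (∑ i, x i * (M.mulVec x i + (p i - w))) = 0 := by
  classical
  set c : Fin N → ℝ :=
    fun i => G i i - (∑ j ∈ Finset.univ.erase i, (G i j + G j i)) / 2 with hcdef
  have hc : ∀ i, 0 < c i := by
    intro i; have := hweak i; simp only [hcdef]; linarith
  have quad := quad_lb G hG s hs.le M hM
  -- uniqueness
  have uniq : ∀ x y : Fin N → ℝ,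
      ((∀ i, 0 ≤ x i) ∧ (∀ i, 0 ≤ M.mulVec x i + (p i - w)) ∧
        (∑ i, x i * (M.mulVec x i + (p i - w))) = 0) →
      ((∀ i, 0 ≤ y i) ∧ (∀ i, 0 ≤ M.mulVec y i + (p i - w)) ∧
        (∑ i, y i * (M.mulVec y i + (p i - w))) = 0) → x = y := by
    rintro x y ⟨hx0, hx1, hx2⟩ ⟨hy0, hy1, hy2⟩
    have tx : ∀ i, x i * (M.mulVec x i + (p i - w)) = 0 := by
      intro i
      exact (Finset.sum_eq_zero_iff_of_nonneg
        (fun i _ => mul_nonneg (hx0 i) (hx1 i))).mp hx2 i (Finset.mem_univ i)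
    have ty : ∀ i, y i * (M.mulVec y i + (p i - w)) = 0 := by
      intro i
      exact (Finset.sum_eq_zero_iff_of_nonneg
        (fun i _ => mul_nonneg (hy0 i) (hy1 i))).mp hy2 i (Finset.mem_univ i)
    set d : Fin N → ℝ := fun i => x i - y i with hddef
    have hd : ∑ i, d i * M.mulVec d i ≤ 0 := by
      refine Finset.sum_nonpos fun i _ => ?_
      have e : d i * M.mulVec d i
          = x i * (M.mulVec x i + (p i - w)) + y i * (M.mulVec y i + (p i - w))
            - x i * (M.mulVec y i + (p i - w)) - y i * (M.mulVec x i + (p i - w)) := by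
        rw [hddef]; rw [mulVec_sub' M x y i]; ring
      rw [e, tx, ty]
      have h1 := mul_nonneg (hx0 i) (hy1 i)
      have h2 := mul_nonneg (hy0 i) (hx1 i)
      linarith
    have hsum : ∑ i, c i * d i ^ 2 ≤ 0 := le_trans (quad d) hd
    have hz : ∀ i, d i = 0 := by
      intro i
      have := (Finset.sum_eq_zero_iff_of_nonneg
        (fun i _ => mul_nonneg (hc i).le (sq_nonneg (d i)))).mp
        (le_antisymm hsum (Finset.sum_nonneg fun i _ =>
          mul_nonneg (hc i).le (sq_nonneg (d i)))) i (Finset.mem_univ i)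
      have := (mul_eq_zero.mp this).resolve_left (hc i).ne'
      exact pow_eq_zero_iff (n := 2) (by norm_num) |>.mp this
    funext i
    have := hz i
    simp only [hddef] at this
    linarith
  rcases Nat.eq_zero_or_pos N with hN | hN
  · subst hN
    refine ⟨fun _ => 0, ⟨fun i => i.elim0, fun i => i.elim0, by simp⟩,
      fun y _ => funext fun i => i.elim0⟩
  -- existence via Banach fixed point
  haveI : Nonempty (Fin N) := ⟨⟨0, hN⟩⟩
  set μ : ℝ := Finset.univ.inf' Finset.univ_nonempty c with hμdef
  have hμpos : 0 < μ := (Finset.lt_inf'_iff _).mpr fun i _ => hc i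
  have hμle : ∀ i, μ ≤ c i := fun i => Finset.inf'_le _ (Finset.mem_univ i)
  set C : ℝ := ∑ i, ∑ j, (M i j) ^ 2 with hCdef
  have hMpos : ∀ i j, 0 < M i j := fun i j => by rw [hM]; have := hG j i; linarith
  have hCpos : 0 < C := by
    refine Finset.sum_pos (fun i _ => Finset.sum_pos
      (fun j _ => pow_pos (hMpos i j) 2) Finset.univ_nonempty) Finset.univ_nonempty
  have hμC : μ ^ 2 ≤ C := by
    obtain ⟨i0⟩ := ‹Nonempty (Fin N)›
    have hsum0 : 0 ≤ ∑ j ∈ Finset.univ.erase i0, (G i0 j + G j i0) :=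
      Finset.sum_nonneg fun j _ => by have := hG i0 j; have := hG j i0; linarith
    have h1 : μ ≤ M i0 i0 := by
      have := hμle i0
      simp only [hcdef] at this
      rw [hM]
      linarith
    have h2 : (M i0 i0) ^ 2 ≤ C := by
      calc (M i0 i0) ^ 2 ≤ ∑ j, (M i0 j) ^ 2 :=
            Finset.single_le_sum (f := fun j => (M i0 j) ^ 2)
              (fun j _ => sq_nonneg _) (Finset.mem_univ i0)
        _ ≤ C := Finset.single_le_sum (f := fun i => ∑ j, (M i j) ^ 2)
            (fun i _ => Finset.sum_nonneg fun j _ => sq_nonneg _) (Finset.mem_univ i0)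
    calc μ ^ 2 ≤ (M i0 i0) ^ 2 := by
          have := hMpos i0 i0; nlinarith
      _ ≤ C := h2
  set α : ℝ := μ / C with hαdef
  have hα : 0 < α := div_pos hμpos hCpos
  let F : EuclideanSpace ℝ (Fin N) → EuclideanSpace ℝ (Fin N) :=
    fun x => WithLp.toLp 2 (fun i => max 0 (x i - α * (M.mulVec x i + (p i - w))))
  have hF2 : ∀ x y : EuclideanSpace ℝ (Fin N),
      ∑ i, (F x i - F y i) ^ 2 ≤ (1 - μ ^ 2 / C) * ∑ i, (x i - y i) ^ 2 := by
    intro x y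
    set d : Fin N → ℝ := fun i => x i - y i with hddef
    have habs : ∀ i, (F x i - F y i) ^ 2 ≤ (d i - α * M.mulVec d i) ^ 2 := by
      intro i
      have h1 : |F x i - F y i|
          ≤ |(x i - α * (M.mulVec x i + (p i - w)))
              - (y i - α * (M.mulVec y i + (p i - w)))| := by
        simpa using abs_max_sub_max_le_max 0 (x i - α * (M.mulVec x i + (p i - w)))
          0 (y i - α * (M.mulVec y i + (p i - w)))
      have h2 : (x i - α * (M.mulVec x i + (p i - w)))
          - (y i - α * (M.mulVec y i + (p i - w))) = d i - α * M.mulVec d i := by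
        rw [hddef, mulVec_sub' M x y i]; ring
      rw [h2] at h1
      calc (F x i - F y i) ^ 2 = |F x i - F y i| ^ 2 := by rw [sq_abs]
        _ ≤ |d i - α * M.mulVec d i| ^ 2 := by
            exact pow_le_pow_left₀ (abs_nonneg _) h1 2
        _ = (d i - α * M.mulVec d i) ^ 2 := by rw [sq_abs]
    have hsum1 : ∑ i, (F x i - F y i) ^ 2 ≤ ∑ i, (d i - α * M.mulVec d i) ^ 2 :=
      Finset.sum_le_sum fun i _ => habs i
    have hexp : ∑ i, (d i - α * M.mulVec d i) ^ 2
        = ∑ i, d i ^ 2 - 2 * α * (∑ i, d i * M.mulVec d i)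
          + α ^ 2 * ∑ i, (M.mulVec d i) ^ 2 := by
      calc ∑ i, (d i - α * M.mulVec d i) ^ 2
          = ∑ i, (d i ^ 2 - 2 * α * (d i * M.mulVec d i) + α ^ 2 * (M.mulVec d i) ^ 2) :=
            Finset.sum_congr rfl fun i _ => by ring
        _ = _ := by
            rw [Finset.sum_add_distrib, Finset.sum_sub_distrib,
              ← Finset.mul_sum, ← Finset.mul_sum]
    have hmono : μ * ∑ i, d i ^ 2 ≤ ∑ i, d i * M.mulVec d i := by
      calc μ * ∑ i, d i ^ 2 = ∑ i, μ * d i ^ 2 := Finset.mul_sum _ _ _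
        _ ≤ ∑ i, c i * d i ^ 2 := Finset.sum_le_sum fun i _ =>
            mul_le_mul_of_nonneg_right (hμle i) (sq_nonneg _)
        _ ≤ ∑ i, d i * M.mulVec d i := quad d
    have hop : ∑ i, (M.mulVec d i) ^ 2 ≤ C * ∑ i, d i ^ 2 := by
      calc ∑ i, (M.mulVec d i) ^ 2
          ≤ ∑ i, ((∑ j, (M i j) ^ 2) * ∑ j, d j ^ 2) := by
            refine Finset.sum_le_sum fun i _ => ?_
            exact Finset.sum_mul_sq_le_sq_mul_sq Finset.univ (fun j => M i j) d
        _ = C * ∑ i, d i ^ 2 := by rw [hCdef, Finset.sum_mul]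
    have hdd : 0 ≤ ∑ i, d i ^ 2 := Finset.sum_nonneg fun i _ => sq_nonneg _
    have step : ∑ i, (d i - α * M.mulVec d i) ^ 2
        ≤ (1 - 2 * α * μ + α ^ 2 * C) * ∑ i, d i ^ 2 := by
      rw [hexp]
      have e1 : 2 * α * (μ * ∑ i, d i ^ 2) ≤ 2 * α * ∑ i, d i * M.mulVec d i :=
        mul_le_mul_of_nonneg_left hmono (by linarith)
      have e2 : α ^ 2 * ∑ i, (M.mulVec d i) ^ 2 ≤ α ^ 2 * (C * ∑ i, d i ^ 2) :=
        mul_le_mul_of_nonneg_left hop (sq_nonneg _)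
      nlinarith
    have keyco : 1 - 2 * α * μ + α ^ 2 * C = 1 - μ ^ 2 / C := by
      rw [hαdef]; field_simp; ring
    calc ∑ i, (F x i - F y i) ^ 2 ≤ ∑ i, (d i - α * M.mulVec d i) ^ 2 := hsum1
      _ ≤ (1 - 2 * α * μ + α ^ 2 * C) * ∑ i, d i ^ 2 := step
      _ = (1 - μ ^ 2 / C) * ∑ i, (x i - y i) ^ 2 := by rw [keyco]
  have hfrac : 0 < μ ^ 2 / C := div_pos (pow_pos hμpos 2) hCpos
  have hfrac1 : μ ^ 2 / C ≤ 1 := (div_le_one hCpos).mpr hμC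
  set k0 : ℝ := Real.sqrt (1 - μ ^ 2 / C) with hk0def
  have hk0nn : 0 ≤ k0 := Real.sqrt_nonneg _
  have hk0lt : k0 < 1 := by
    rw [hk0def]
    calc Real.sqrt (1 - μ ^ 2 / C) < Real.sqrt 1 :=
          Real.sqrt_lt_sqrt (by linarith) (by linarith)
      _ = 1 := Real.sqrt_one
  set k : NNReal := ⟨k0, hk0nn⟩ with hkdef
  have hcontr : ContractingWith k F := by
    constructor
    · exact_mod_cast hk0lt
    · apply LipschitzWith.of_dist_le_mul
      intro x y
      rw [EuclideanSpace.dist_eq, EuclideanSpace.dist_eq]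
      have e1 : ∀ (u v : EuclideanSpace ℝ (Fin N)),
          (∑ i, dist (u i) (v i) ^ 2) = ∑ i, (u i - v i) ^ 2 := by
        intro u v
        exact Finset.sum_congr rfl fun i _ => by rw [Real.dist_eq, sq_abs]
      rw [e1, e1]
      have h1 : Real.sqrt (∑ i, (F x i - F y i) ^ 2)
          ≤ Real.sqrt ((1 - μ ^ 2 / C) * ∑ i, (x i - y i) ^ 2) :=
        Real.sqrt_le_sqrt (hF2 x y)
      have h2 : Real.sqrt ((1 - μ ^ 2 / C) * ∑ i, (x i - y i) ^ 2)
          = k0 * Real.sqrt (∑ i, (x i - y i) ^ 2) := by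
        rw [Real.sqrt_mul (by linarith), hk0def]
      calc Real.sqrt (∑ i, (F x i - F y i) ^ 2)
          ≤ k0 * Real.sqrt (∑ i, (x i - y i) ^ 2) := by rw [← h2]; exact h1
        _ = (k : ℝ) * Real.sqrt (∑ i, (x i - y i) ^ 2) := rfl
  set xs : EuclideanSpace ℝ (Fin N) := ContractingWith.fixedPoint F hcontr with hxsdef
  have hfix : F xs = xs := ContractingWith.fixedPoint_isFixedPt hcontr
  have hptw : ∀ i, max 0 (xs i - α * (M.mulVec xs i + (p i - w))) = xs i :=
    fun i => congrFun (congrArg WithLp.ofLp hfix) i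
  have h0 : ∀ i, 0 ≤ xs i := by
    intro i; rw [← hptw i]; exact le_max_left _ _
  have h1 : ∀ i, 0 ≤ M.mulVec xs i + (p i - w) := by
    intro i
    have ht := le_max_right 0 (xs i - α * (M.mulVec xs i + (p i - w)))
    rw [hptw i] at ht
    by_contra hcon
    push_neg at hcon
    have := mul_neg_of_pos_of_neg hα hcon
    linarith
  have h2 : ∀ i, xs i * (M.mulVec xs i + (p i - w)) = 0 := by
    intro i
    rcases eq_or_lt_of_le (h0 i) with hz | hpos
    · rw [← hz, zero_mul]
    · have hmax := hptw i
      rcases le_or_gt (xs i - α * (M.mulVec xs i + (p i - w))) 0 with ht | ht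
      · rw [max_eq_left ht] at hmax; linarith
      · rw [max_eq_right ht.le] at hmax
        have hmul : α * (M.mulVec xs i + (p i - w)) = 0 := by linarith
        have := (mul_eq_zero.mp hmul).resolve_left hα.ne'
        rw [this, mul_zero]
  refine ⟨fun i => xs i, ⟨h0, h1, Finset.sum_eq_zero fun i _ => h2 i⟩, ?_⟩
  intro y hy
  exact uniq y (fun i => xs i) hy ⟨h0, h1, Finset.sum_eq_zero fun i _ => h2 i⟩
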